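/- If G is NWUE with mean α, i.e. ∫₀^∞ (1 − G(v)) dv = α and ∫_t^∞ (1 − G(v)) dv ≥ α(1 − G(t)) for all t ≥ 0, then ∫_t^∞ (1 − G(v)) dv ≥ α e^{−t/α} for all t ≥ 0. (An NWUE service time distribution dominates in the variability order the exponential distribution with the same mean.) -/

import Mathlib

open MeasureTheory Real Set Filter

/-- An NWUE distribution dominates in the variability order the exponential
distribution with the same mean: if `∫_t^∞ (1-G) ≥ α(1 - G(t))` for all `t ≥ 0`,
then `∫_t^∞ (1-G) ≥ α e^{-t/α}` for all `t ≥ 0`. -/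
theorem nwue_integrated_tail_ge_exponential
    (G : ℝ → ℝ)
    (hmono : Monotone G)
    (hrc : ∀ v : ℝ, ContinuousWithinAt G (Set.Ici v) v)
    (hneg : ∀ v : ℝ, v < 0 → G v = 0)
    (hlim : Tendsto G atTop (nhds 1))
    (α : ℝ)
    (hInt : IntegrableOn (fun v => 1 - G v) (Ioi 0))
    (hα : α = ∫ v in Ioi (0:ℝ), (1 - G v))
    (hαpos : 0 < α)
    (hNWUE : ∀ t : ℝ, 0 ≤ t → α * (1 - G t) ≤ ∫ v in Ioi t, (1 - G v)) :
    ∀ t : ℝ, 0 ≤ t → α * exp (-t / α) ≤ ∫ v in Ioi t, (1 - G v) := by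
  intro t ht
  -- notation
  set f : ℝ → ℝ := fun v => 1 - G v with hf
  have hanti : Antitone f := fun a b hab => by
    simp only [hf]; linarith [hmono hab]
  have h_ii : ∀ a b : ℝ, IntervalIntegrable f volume a b := fun a b =>
    hanti.intervalIntegrable
  -- the primitive and the tail
  have key : ∀ x : ℝ, 0 ≤ x →
      (∫ v in Ioi x, f v) = α - ∫ v in (0:ℝ)..x, f v := by
    intro x hx
    have hsplit : (Ioc (0:ℝ) x) ∪ (Ioi x) = Ioi 0 := Ioc_union_Ioi_eq_Ioi hx
    have hdisj : Disjoint (Ioc (0:ℝ) x) (Ioi x) := Ioc_disjoint_Ioi le_rfl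
    have h1 : IntegrableOn f (Ioc (0:ℝ) x) := hInt.mono_set Ioc_subset_Ioi_self
    have h2 : IntegrableOn f (Ioi x) := hInt.mono_set (Ioi_subset_Ioi hx)
    have := setIntegral_union hdisj measurableSet_Ioi h1 h2
    rw [hsplit] at this
    rw [intervalIntegral.integral_of_le hx]
    rw [hα]
    simp only [hf] at this ⊢
    linarith
  -- right-continuity and measurability of f
  have hmeasf : Measurable f := (measurable_const.sub hmono.measurable)
  have hrcf : ∀ x : ℝ, ContinuousWithinAt f (Ici x) x := fun x =>
    (continuous_const.continuousWithinAt).sub (hrc x)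
  -- define K and its right derivative
  set K : ℝ → ℝ := fun x => exp (x / α) * (α - ∫ v in (0:ℝ)..x, f v) with hK
  have hKderiv : ∀ x : ℝ,
      HasDerivWithinAt K
        (exp (x / α) / α * (α - ∫ v in (0:ℝ)..x, f v) + exp (x / α) * (-f x))
        (Ici x) x := by
    intro x
    have h1 : HasDerivWithinAt (fun y : ℝ => exp (y / α)) (exp (x / α) / α) (Ici x) x := by
      have : HasDerivAt (fun y : ℝ => exp (y / α)) (exp (x / α) * (1 / α)) x := by
        have hd : HasDerivAt (fun y : ℝ => y / α) (1 / α) x := by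
          simpa using (hasDerivAt_id x).div_const α
        exact (Real.hasDerivAt_exp (x / α)).comp x hd
      simpa [mul_one_div, div_eq_mul_inv] using this.hasDerivWithinAt
    have h2 : HasDerivWithinAt (fun y : ℝ => ∫ v in (0:ℝ)..y, f v) (f x) (Ici x) x := by
      exact intervalIntegral.integral_hasDerivWithinAt_right (h_ii 0 x)
        (hmeasf.stronglyMeasurable.stronglyMeasurableAtFilter)
        ((hrcf x).mono Ioi_subset_Ici_self)
    have h3 : HasDerivWithinAt (fun y : ℝ => α - ∫ v in (0:ℝ)..y, f v) (-f x) (Ici x) x := by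
      have h3' := (hasDerivWithinAt_const x (Ici x) α).sub h2
      simp only [zero_sub] at h3'
      exact h3'
    exact h1.mul h3
  -- the right derivative of K is nonneg on [0, ∞)
  have hKderiv_nonneg : ∀ x : ℝ, 0 ≤ x →
      0 ≤ exp (x / α) / α * (α - ∫ v in (0:ℝ)..x, f v) + exp (x / α) * (-f x) := by
    intro x hx
    have hkx := key x hx
    have hn := hNWUE x hx
    rw [hkx] at hn
    have hexp : 0 < exp (x / α) := exp_pos _
    have : α * f x ≤ α - ∫ v in (0:ℝ)..x, f v := by simpa [hf] using hn
    have h4 : f x ≤ (α - ∫ v in (0:ℝ)..x, f v) / α := by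
      rw [le_div_iff₀ hαpos]; linarith
    have h5 : exp (x / α) * f x ≤ exp (x / α) / α * (α - ∫ v in (0:ℝ)..x, f v) := by
      rw [div_mul_eq_mul_div, le_div_iff₀ hαpos]
      calc exp (x / α) * f x * α = exp (x / α) * (f x * α) := by ring
        _ ≤ exp (x / α) * (α - ∫ v in (0:ℝ)..x, f v) := by
            apply mul_le_mul_of_nonneg_left _ hexp.le
            linarith
        _ = exp (x / α) * (α - ∫ v in (0:ℝ)..x, f v) := rfl
    linarith
  -- K is continuous
  have hKcont : Continuous K := by
    apply Continuous.mul
    · exact Real.continuous_exp.comp (continuous_id.div_const α)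
    · exact continuous_const.sub (intervalIntegral.continuous_primitive h_ii 0)
  -- apply the fencing theorem to -K on [0, t] with boundary -α
  have hfence : ∀ x ∈ Icc (0:ℝ) t, -K x ≤ -α := by
    apply image_le_of_deriv_right_le_deriv_boundary
      (f := fun x => -K x)
      (f' := fun x => -(exp (x / α) / α * (α - ∫ v in (0:ℝ)..x, f v) + exp (x / α) * (-f x)))
      (B := fun _ => -α) (B' := fun _ => 0)
    · exact hKcont.neg.continuousOn
    · intro x _
      exact (hKderiv x).neg
    · simp [hK]
    · exact continuousOn_const
    · intro x _
      exact hasDerivWithinAt_const x _ (-α)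
    · intro x hx
      have := hKderiv_nonneg x hx.1
      linarith
  have hKt : α ≤ K t := by
    have := hfence t ⟨ht, le_rfl⟩
    linarith
  -- conclude
  rw [key t ht]
  have hexp : 0 < exp (t / α) := exp_pos _
  have hinv : exp (-t / α) = (exp (t / α))⁻¹ := by
    rw [← Real.exp_neg]; ring_nf
  rw [hK] at hKt
  simp only at hKt
  rw [hinv]
  rw [mul_inv_le_iff₀ hexp]
  linarith [hKt, mul_comm (rexp (t / α)) (α - ∫ v in (0:ℝ)..t, f v)]
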